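/- Let p > 0 and let (u,v) be a classical solution of the system (S₃) on ℝ³ such that u ≥ 0 on ℝ³ and the finite total mass condition ∬_{ℝ³×ℝ³} u²(x)u²(y)/|x−y|² dx dy < ∞ holds. Set α := (1/(2π²)) ∫_{ℝ³} P₃(y) dy (so α ∈ (0,∞)). Then there exist a constant C ∈ ℝ and R > 0 such that for every x with |x| ≥ R: (1/(2π²)) ∫_{ℝ³} P₃(y)·ln(|x−y|/|y|) dy ≤ α·ln|x| + C. -/
import Mathlib


open MeasureTheory Filter Topology
open scoped NNReal
open scoped ENNReal

noncomputable section

abbrev E3 := EuclideanSpace ℝ (Fin 3)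

/-- The normalizing constant `C₃ = (∫_{ℝ³} (1 − cos(2πζ₁))/|ζ|⁴ dζ)⁻¹`. -/
def C3 : ℝ := (∫ ζ : E3, (1 - Real.cos (2 * Real.pi * ζ 0)) / ‖ζ‖ ^ 4)⁻¹

/-- The assertion `(−Δ)^{1/2} w (x) = h`, i.e. the principal-value limit exists and equals `h`. -/
def HalfLapEq3 (w : E3 → ℝ) (x : E3) (h : ℝ) : Prop :=
  Tendsto (fun ε : ℝ =>
      C3 * ∫ y in {y : E3 | ε ≤ ‖y - x‖}, (w x - w y) / ‖x - y‖ ^ 4)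
    (𝓝[>] (0 : ℝ)) (𝓝 h)

/-- The Euclidean Laplacian `Δw(x) = ∑ᵢ ∂²w/∂xᵢ²`. -/
def lap3 (w : E3 → ℝ) (x : E3) : ℝ :=
  ∑ i : Fin 3,
    fderiv ℝ (fun z => fderiv ℝ w z (EuclideanSpace.single i 1)) x (EuclideanSpace.single i 1)

/-- Local Hölder continuity of a map `g`. -/
def LocHolder3 {F : Type*} [NormedAddCommGroup F] (g : E3 → F) : Prop :=
  ∀ x : E3, ∃ (C a : ℝ≥0) (r : ℝ), 0 < r ∧ 0 < (a : ℝ) ∧ (a : ℝ) ≤ 1 ∧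
    HolderOnWith C a g (Metric.ball x r)

/-- `P₃(y) = (∫ u²(z)/|y−z|² dz) · u²(y)`. -/
def P3 (u : E3 → ℝ) (y : E3) : ℝ := (∫ z : E3, u z ^ 2 / ‖y - z‖ ^ 2) * u y ^ 2

/-- `(u,v)` is a classical solution of the system (S₃) on ℝ³. -/
structure IsSolution3 (p : ℝ) (u v : E3 → ℝ) : Prop where
  u_C1 : ContDiff ℝ 1 u
  u_grad_holder : LocHolder3 (fderiv ℝ u)
  u_int : Integrable (fun x : E3 => |u x| / (1 + ‖x‖ ^ 4))
  v_C3 : ContDiff ℝ 3 v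
  v_D3_holder : LocHolder3 (iteratedFDeriv ℝ 3 v)
  lapv_int : Integrable (fun x : E3 => |lap3 v x| / (1 + ‖x‖ ^ 4))
  eq_u : ∀ x : E3, HalfLapEq3 u x (Real.exp (p * v x))
  eq_v : ∀ x : E3, HalfLapEq3 (fun z => -lap3 v z) x (P3 u x)

/-- The finite total mass condition `∬ u²(x)u²(y)/|x−y|² dx dy < ∞`. -/
def FiniteMass3 (u : E3 → ℝ) : Prop :=
  Integrable (fun q : E3 × E3 => u q.1 ^ 2 * u q.2 ^ 2 / ‖q.1 - q.2‖ ^ 2)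

-- auxiliary lemmas

lemma P3_eq (u : E3 → ℝ) (y : E3) :
    P3 u y = ∫ z : E3, u y ^ 2 * u z ^ 2 / ‖y - z‖ ^ 2 := by
  rw [P3, mul_comm, ← integral_const_mul]
  congr 1; funext z; ring

lemma P3_nonneg (u : E3 → ℝ) (y : E3) : 0 ≤ P3 u y :=
  mul_nonneg (integral_nonneg fun z => div_nonneg (sq_nonneg _) (sq_nonneg _)) (sq_nonneg _)

theorem stmt5 (p : ℝ) (hp : 0 < p) (u v : E3 → ℝ)
    (hsol : IsSolution3 p u v)
    (hu_nonneg : ∀ x : E3, 0 ≤ u x)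
    (hmass : FiniteMass3 u)
    (α : ℝ) (hα : α = 1 / (2 * Real.pi ^ 2) * (∫ y : E3, P3 u y)) :
    0 < α ∧
    ∃ C R : ℝ, 0 < R ∧ ∀ x : E3, R ≤ ‖x‖ →
      1 / (2 * Real.pi ^ 2) * (∫ y : E3, P3 u y * Real.log (‖x - y‖ / ‖y‖)) ≤
        α * Real.log ‖x‖ + C := by
  have hmass' : Integrable (fun q : E3 × E3 => u q.1 ^ 2 * u q.2 ^ 2 / ‖q.1 - q.2‖ ^ 2)
      ((volume : Measure E3).prod volume) := by
    rw [← Measure.volume_eq_prod]; exact hmass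
  -- P3 is integrable
  have hP3int : Integrable (P3 u) := by
    have h := hmass'.integral_prod_left
    simpa only [← P3_eq] using h
  -- u is positive somewhere
  have hupos : ∃ y : E3, 0 < u y := by
    by_contra h
    push_neg at h
    have hzero : ∀ y, u y = 0 := fun y => le_antisymm (h y) (hu_nonneg y)
    have h1 := hsol.eq_u 0
    unfold HalfLapEq3 at h1
    have h2 : (fun ε : ℝ =>
        C3 * ∫ y in {y : E3 | ε ≤ ‖y - 0‖}, (u 0 - u y) / ‖(0 : E3) - y‖ ^ 4)
        = fun _ => (0 : ℝ) := by
      funext ε; simp [hzero]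
    rw [h2] at h1
    have h3 := tendsto_nhds_unique h1 tendsto_const_nhds
    exact (Real.exp_pos (p * v 0)).ne' h3
  obtain ⟨y₀, hy₀⟩ := hupos
  -- the open set where u > 0
  set s : Set E3 := {y | 0 < u y} with hs
  have hs_open : IsOpen s := isOpen_lt continuous_const hsol.u_C1.continuous
  have hμs : 0 < volume s := hs_open.measure_pos volume ⟨y₀, hy₀⟩
  -- a.e. y, the slice is integrable
  have hae := hmass'.prod_right_ae
  set T : Set E3 := {y | Integrable (fun z : E3 => u y ^ 2 * u z ^ 2 / ‖y - z‖ ^ 2)} with hT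
  have hTc : volume Tᶜ = 0 := by
    rw [ae_iff] at hae; exact hae
  -- on s ∩ T, P3 is positive
  have hsub : s \ Tᶜ ⊆ Function.support (P3 u) := by
    rintro y ⟨hys, hyT⟩
    rw [Set.notMem_compl_iff] at hyT
    have huy : (0 : ℝ) < u y := hys
    have huy2 : (0 : ℝ) < u y ^ 2 := by positivity
    have hinner_int : Integrable (fun z : E3 => u z ^ 2 / ‖y - z‖ ^ 2) := by
      have h2 := hyT.const_mul ((u y ^ 2)⁻¹)
      have : (fun z : E3 => (u y ^ 2)⁻¹ * (u y ^ 2 * u z ^ 2 / ‖y - z‖ ^ 2))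
          = fun z : E3 => u z ^ 2 / ‖y - z‖ ^ 2 := by
        funext z; field_simp
      rwa [this] at h2
    have hinner_pos : 0 < ∫ z : E3, u z ^ 2 / ‖y - z‖ ^ 2 := by
      rw [integral_pos_iff_support_of_nonneg_ae
        (Eventually.of_forall fun z => div_nonneg (sq_nonneg _) (sq_nonneg _)) hinner_int]
      have hsub2 : s \ {y} ⊆ Function.support (fun z : E3 => u z ^ 2 / ‖y - z‖ ^ 2) := by
        rintro z ⟨hzs, hzy⟩
        have huz : (0 : ℝ) < u z := hzs
        have hne : y - z ≠ 0 := sub_ne_zero.mpr (Ne.symm hzy)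
        have : (0 : ℝ) < u z ^ 2 / ‖y - z‖ ^ 2 := by
          apply div_pos (by positivity)
          have : (0:ℝ) < ‖y - z‖ := norm_pos_iff.mpr hne
          positivity
        exact ne_of_gt this
      calc (0 : ℝ≥0∞) < volume s := hμs
        _ = volume (s \ {y}) := (measure_diff_null (measure_singleton y)).symm
        _ ≤ _ := measure_mono hsub2
    exact ne_of_gt (mul_pos hinner_pos huy2)
  have hsup_pos : 0 < volume (Function.support (P3 u)) := by
    calc (0 : ℝ≥0∞) < volume s := hμs
      _ = volume (s \ Tᶜ) := (measure_diff_null hTc).symm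
      _ ≤ _ := measure_mono hsub
  have hA : 0 < ∫ y : E3, P3 u y :=
    (integral_pos_iff_support_of_nonneg_ae
      (Eventually.of_forall (P3_nonneg u)) hP3int).mpr hsup_pos
  have hπ : (0 : ℝ) < 1 / (2 * Real.pi ^ 2) := by positivity
  have hαpos : 0 < α := by rw [hα]; exact mul_pos hπ hA
  refine ⟨hαpos, ?_⟩
  set A : ℝ := ∫ y : E3, P3 u y with hAdef
  -- the "bad" part near the origin
  set m : E3 → ℝ := fun y => P3 u y * max 0 (-Real.log ‖y‖) with hm
  have hm_nonneg : ∀ y, 0 ≤ m y := fun y =>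
    mul_nonneg (P3_nonneg u y) (le_max_left _ _)
  have hm_meas : AEStronglyMeasurable m volume := by
    apply hP3int.aestronglyMeasurable.mul
    exact (measurable_const.max ((Real.measurable_log.comp measurable_norm).neg)).aestronglyMeasurable
  -- pointwise upper bound
  have hbound : ∀ x y : E3, 4 ≤ ‖x‖ →
      P3 u y * Real.log (‖x - y‖ / ‖y‖) ≤ P3 u y * Real.log (2 * ‖x‖) + m y := by
    intro x y hx
    have hx1 : (1 : ℝ) ≤ ‖x‖ := by linarith
    have hx0 : (0 : ℝ) < ‖x‖ := by linarith
    have hlog2x : 0 ≤ Real.log (2 * ‖x‖) := Real.log_nonneg (by linarith)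
    have hrhs_nn : 0 ≤ P3 u y * Real.log (2 * ‖x‖) + m y :=
      add_nonneg (mul_nonneg (P3_nonneg u y) hlog2x) (hm_nonneg y)
    by_cases hy0 : y = 0
    · subst hy0
      simp only [norm_zero, div_zero, Real.log_zero, mul_zero]
      exact hrhs_nn
    by_cases hyx : y = x
    · subst hyx
      simp only [sub_self, norm_zero, zero_div, Real.log_zero, mul_zero]
      exact hrhs_nn
    have hyn : (0 : ℝ) < ‖y‖ := norm_pos_iff.mpr hy0
    have hxyn : (0 : ℝ) < ‖x - y‖ := norm_pos_iff.mpr (sub_ne_zero.mpr (Ne.symm hyx))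
    rw [Real.log_div (ne_of_gt hxyn) (ne_of_gt hyn)]
    have key : Real.log ‖x - y‖ - Real.log ‖y‖ ≤ Real.log (2 * ‖x‖) + max 0 (-Real.log ‖y‖) := by
      rcases le_or_gt 1 ‖y‖ with hy1 | hy1
      · have h1 : ‖x - y‖ ≤ 2 * ‖x‖ * ‖y‖ := by
          have := norm_sub_le x y
          nlinarith [norm_nonneg x, norm_nonneg y]
        have h2 : Real.log ‖x - y‖ ≤ Real.log (2 * ‖x‖ * ‖y‖) :=
          Real.log_le_log hxyn h1
        rw [Real.log_mul (by positivity) (ne_of_gt hyn)] at h2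
        have h3 : (0:ℝ) ≤ max 0 (-Real.log ‖y‖) := le_max_left _ _
        linarith
      · have h1 : ‖x - y‖ ≤ 2 * ‖x‖ := by
          have := norm_sub_le x y
          linarith
        have h2 : Real.log ‖x - y‖ ≤ Real.log (2 * ‖x‖) :=
          Real.log_le_log hxyn h1
        have h3 : -Real.log ‖y‖ ≤ max 0 (-Real.log ‖y‖) := le_max_right _ _
        linarith
    calc P3 u y * (Real.log ‖x - y‖ - Real.log ‖y‖)
        ≤ P3 u y * (Real.log (2 * ‖x‖) + max 0 (-Real.log ‖y‖)) :=
          mul_le_mul_of_nonneg_left key (P3_nonneg u y)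
      _ = P3 u y * Real.log (2 * ‖x‖) + m y := by simp only [hm]; ring
  -- lower bound : m ≤ |f x|
  have hlower : ∀ x y : E3, 4 ≤ ‖x‖ →
      m y ≤ |P3 u y * Real.log (‖x - y‖ / ‖y‖)| := by
    intro x y hx
    rcases le_or_gt 1 ‖y‖ with hy1 | hy1
    · have : max 0 (-Real.log ‖y‖) = 0 :=
        max_eq_left (neg_nonpos.mpr (Real.log_nonneg hy1))
      simp only [hm, this, mul_zero]
      exact abs_nonneg _
    by_cases hy0 : y = 0
    · simp [hm, hy0]
    have hyn : (0 : ℝ) < ‖y‖ := norm_pos_iff.mpr hy0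
    have hlogy : Real.log ‖y‖ < 0 := Real.log_neg hyn hy1
    have hmax : max 0 (-Real.log ‖y‖) = -Real.log ‖y‖ :=
      max_eq_right (by linarith)
    have hxy : (3 : ℝ) ≤ ‖x - y‖ := by
      have := norm_sub_norm_le x y
      have h2 := abs_le.mp (le_refl |‖x‖ - ‖y‖|)
      have : ‖x‖ - ‖y‖ ≤ ‖x - y‖ := le_trans (le_abs_self _) (abs_norm_sub_norm_le x y)
      linarith
    have hxyn : (0 : ℝ) < ‖x - y‖ := by linarith
    have hlogxy : 0 ≤ Real.log ‖x - y‖ := Real.log_nonneg (by linarith)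
    rw [Real.log_div (ne_of_gt hxyn) (ne_of_gt hyn)]
    have h1 : m y ≤ P3 u y * (Real.log ‖x - y‖ - Real.log ‖y‖) := by
      simp only [hm, hmax]
      apply mul_le_mul_of_nonneg_left _ (P3_nonneg u y)
      linarith
    exact le_trans h1 (le_abs_self _)
  by_cases hmint : Integrable m
  · -- main case
    refine ⟨max 0 ((A * Real.log 2 + ∫ y, m y) / (2 * Real.pi ^ 2)), 4, by norm_num, ?_⟩
    intro x hx
    have hlogx : 0 ≤ Real.log ‖x‖ := Real.log_nonneg (by linarith)
    by_cases hf : Integrable (fun y : E3 => P3 u y * Real.log (‖x - y‖ / ‖y‖))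
    · have hg : Integrable (fun y : E3 => P3 u y * Real.log (2 * ‖x‖) + m y) :=
        (hP3int.mul_const _).add hmint
      have hmono := integral_mono hf hg (fun y => hbound x y hx)
      rw [integral_add (hP3int.mul_const _) hmint] at hmono
      have hconst : ∫ y : E3, P3 u y * Real.log (2 * ‖x‖) = A * Real.log (2 * ‖x‖) := by
        rw [hAdef, ← integral_mul_const]
      rw [hconst] at hmono
      have hlogsplit : Real.log (2 * ‖x‖) = Real.log 2 + Real.log ‖x‖ :=
        Real.log_mul two_ne_zero (by positivity)
      have hfinal : (∫ y : E3, P3 u y * Real.log (‖x - y‖ / ‖y‖)) ≤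
          A * Real.log ‖x‖ + (A * Real.log 2 + ∫ y, m y) := by
        rw [hlogsplit] at hmono; linarith
      have step := mul_le_mul_of_nonneg_left hfinal (le_of_lt hπ)
      calc 1 / (2 * Real.pi ^ 2) * (∫ y : E3, P3 u y * Real.log (‖x - y‖ / ‖y‖))
          ≤ 1 / (2 * Real.pi ^ 2) * (A * Real.log ‖x‖ + (A * Real.log 2 + ∫ y, m y)) := step
        _ = α * Real.log ‖x‖ + (A * Real.log 2 + ∫ y, m y) / (2 * Real.pi ^ 2) := by
            rw [hα, hAdef]; field_simp
        _ ≤ α * Real.log ‖x‖ + max 0 ((A * Real.log 2 + ∫ y, m y) / (2 * Real.pi ^ 2)) := by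
            have := le_max_right (0:ℝ) ((A * Real.log 2 + ∫ y, m y) / (2 * Real.pi ^ 2))
            linarith
    · rw [integral_undef hf, mul_zero]
      have h1 : 0 ≤ α * Real.log ‖x‖ := mul_nonneg (le_of_lt hαpos) hlogx
      have h2 := le_max_left (0:ℝ) ((A * Real.log 2 + ∫ y, m y) / (2 * Real.pi ^ 2))
      linarith
  · -- m not integrable: f x never integrable
    refine ⟨0, 4, by norm_num, ?_⟩
    intro x hx
    have hlogx : 0 ≤ Real.log ‖x‖ := Real.log_nonneg (by linarith)
    have hf : ¬ Integrable (fun y : E3 => P3 u y * Real.log (‖x - y‖ / ‖y‖)) := by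
      intro hf
      apply hmint
      apply hf.mono hm_meas
      apply Eventually.of_forall
      intro y
      rw [Real.norm_eq_abs, Real.norm_eq_abs, abs_of_nonneg (hm_nonneg y)]
      exact hlower x y hx
    rw [integral_undef hf, mul_zero, add_zero]
    exact mul_nonneg (le_of_lt hαpos) hlogx
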